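/- Let G be a connected unicyclic graph on n vertices with α(G) + μ(G) = n − 1, with unique cycle C. Then for every x ∈ N₁(C) and every maximum independent set S of G, the set S ∩ V(T_x) is a maximum independent set of the tree T_x. -/

import Mathlib

/-- A set of vertices is independent if no two of its vertices are adjacent. -/
def SimpleGraph.IsIndepSet' {V : Type*} (G : SimpleGraph V) (s : Set V) : Prop :=
  s.Pairwise (fun a b => ¬ G.Adj a b)

/-- The independence number: the maximum cardinality of an independent set. -/
noncomputable def indepNum {V : Type*} (G : SimpleGraph V) : ℕ :=
  sSup {n | ∃ s : Set V, G.IsIndepSet' s ∧ s.ncard = n}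

/-- The matching number: the maximum cardinality of a matching. -/
noncomputable def matchNum {V : Type*} (G : SimpleGraph V) : ℕ :=
  sSup {n | ∃ M : SimpleGraph.Subgraph G, M.IsMatching ∧ M.edgeSet.ncard = n}

/-- A maximum independent set. -/
def IsMaxIndepSet {V : Type*} (G : SimpleGraph V) (s : Set V) : Prop :=
  G.IsIndepSet' s ∧ s.ncard = indepNum G

/-- The core: intersection of all maximum independent sets. -/
noncomputable def core {V : Type*} (G : SimpleGraph V) : Set V :=
  ⋂₀ {s | IsMaxIndepSet G s}

/-- Open neighborhood of a set. -/
def nbhdSet {V : Type*} (G : SimpleGraph V) (s : Set V) : Set V :=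
  {v | ∃ w ∈ s, G.Adj v w}

/-- Closed neighborhood of a set. -/
def closedNbhdSet {V : Type*} (G : SimpleGraph V) (s : Set V) : Set V :=
  s ∪ nbhdSet G s

/-- The tree component of `G - xy` containing `x`. -/
noncomputable def treeComp {V : Type*} (G : SimpleGraph V) (x y : V) :
    SimpleGraph ((G.deleteEdges {s(x,y)}).connectedComponentMk x).supp :=
  (G.deleteEdges {s(x,y)}).induce ((G.deleteEdges {s(x,y)}).connectedComponentMk x).supp

open SimpleGraph Set

section Helpers

variable {V : Type*} [Fintype V] {G : SimpleGraph V}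

lemma my_bddAbove_indep : BddAbove {n | ∃ s : Set V, G.IsIndepSet' s ∧ s.ncard = n} := by
  refine ⟨Fintype.card V, ?_⟩
  rintro n ⟨s, _, rfl⟩
  simpa [Set.ncard_univ] using Set.ncard_le_ncard (Set.subset_univ s) Set.finite_univ

lemma my_le_indepNum {I : Set V} (h : G.IsIndepSet' I) : I.ncard ≤ _root_.indepNum G :=
  le_csSup my_bddAbove_indep ⟨I, h, rfl⟩

lemma my_le_matchNum {M : G.Subgraph} (h : M.IsMatching) : M.edgeSet.ncard ≤ matchNum G := by
  refine le_csSup ⟨G.edgeSet.ncard, ?_⟩ ⟨M, h, rfl⟩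
  rintro n ⟨M', _, rfl⟩
  exact Set.ncard_le_ncard M'.edgeSet_subset (Set.toFinite _)

/-- The relative independence number of a vertex subset. -/
noncomputable def relAlpha (G : SimpleGraph V) (s : Set V) : ℕ :=
  sSup {n | ∃ I : Set V, I ⊆ s ∧ G.IsIndepSet' I ∧ I.ncard = n}

lemma my_bddAbove_rel (s : Set V) :
    BddAbove {n | ∃ I : Set V, I ⊆ s ∧ G.IsIndepSet' I ∧ I.ncard = n} := by
  refine ⟨Fintype.card V, ?_⟩
  rintro n ⟨I, _, _, rfl⟩
  simpa [Set.ncard_univ] using Set.ncard_le_ncard (Set.subset_univ I) Set.finite_univ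

lemma my_le_relAlpha {I s : Set V} (hIs : I ⊆ s) (h : G.IsIndepSet' I) :
    I.ncard ≤ relAlpha G s :=
  le_csSup (my_bddAbove_rel s) ⟨I, hIs, h, rfl⟩

lemma my_relAlpha_exists (s : Set V) :
    ∃ I : Set V, I ⊆ s ∧ G.IsIndepSet' I ∧ I.ncard = relAlpha G s :=
  Nat.sSup_mem (s := {n | ∃ I : Set V, I ⊆ s ∧ G.IsIndepSet' I ∧ I.ncard = n})
    ⟨0, ∅, Set.empty_subset s, Set.pairwise_empty _, Set.ncard_empty V⟩ (my_bddAbove_rel s)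

lemma my_card_le_edges (hconn : G.Connected) : Fintype.card V ≤ G.edgeSet.ncard + 1 := by
  obtain ⟨r⟩ := hconn.nonempty
  have key : ∀ v : V, v ≠ r → ∃ w, G.Adj v w ∧ G.dist w r + 1 = G.dist v r := by
    intro v hv
    obtain ⟨p, hp⟩ := (hconn v r).exists_walk_length_eq_dist
    have hd : G.dist v r ≠ 0 := by
      rw [dist_ne_zero_iff_ne_and_reachable]
      exact ⟨hv, hconn v r⟩
    cases p with
    | nil => exact absurd rfl hv
    | cons h q =>
      rename_i w
      refine ⟨w, h, ?_⟩
      have h1 : G.dist w r ≤ q.length := dist_le q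
      obtain ⟨q', hq'⟩ := (hconn w r).exists_walk_length_eq_dist
      have h2 : G.dist v r ≤ (Walk.cons h q').length := dist_le _
      simp only [Walk.length_cons] at hp h2
      omega
  choose! w hw1 hw2 using key
  have hinj : Set.InjOn (fun v => s(v, w v)) {v : V | v ≠ r} := by
    intro a ha b hb hab
    by_contra hne
    simp only [Sym2.eq, Sym2.rel_iff', Prod.mk.injEq, Prod.swap_prod_mk] at hab
    rcases hab with ⟨rfl, h2⟩ | ⟨h1, h2⟩
    · exact hne rfl
    · have A := hw2 a ha
      have B := hw2 b hb
      rw [h2] at A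
      rw [← h1] at B
      omega
  have hmaps : Set.MapsTo (fun v => s(v, w v)) {v : V | v ≠ r} G.edgeSet := by
    intro a ha
    exact (hw1 a ha)
  have := Set.ncard_le_ncard_of_injOn _ hmaps hinj (Set.toFinite _)
  have hins : (insert r {v : V | v ≠ r}) = Set.univ := by
    ext a; simp [eq_comm, em]
  have h2 : Fintype.card V = {v : V | v ≠ r}.ncard + 1 := by
    rw [← Nat.card_eq_fintype_card, ← Set.ncard_univ (α := V), ← hins,
      Set.ncard_insert_of_notMem (by simp) (Set.toFinite _)]
  omega

lemma my_connected_deleteEdges {a b : V} (hconn : G.Connected)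
    (hr : (G.deleteEdges {s(a,b)}).Reachable a b) : (G.deleteEdges {s(a,b)}).Connected := by
  have step : ∀ {p q : V}, G.Adj p q → (G.deleteEdges {s(a,b)}).Reachable p q := by
    intro p q h
    by_cases he : s(p, q) = s(a, b)
    · rw [Sym2.eq, Sym2.rel_iff', Prod.mk.injEq, Prod.swap_prod_mk] at he
      rcases he with ⟨rfl, rfl⟩ | ⟨rfl, rfl⟩
      · exact hr
      · exact hr.symm
    · exact (SimpleGraph.deleteEdges_adj.mpr ⟨h, he⟩).reachable
  have lift : ∀ {u w : V} (p : G.Walk u w), (G.deleteEdges {s(a,b)}).Reachable u w := by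
    intro u w p
    induction p with
    | nil => exact Reachable.refl _
    | cons h q ih => exact (step h).trans ih
  haveI : Nonempty V := hconn.nonempty
  refine ⟨fun u w => ?_⟩
  obtain ⟨p⟩ := hconn u w
  exact lift p

lemma my_two_cycles (hconn : G.Connected) (huni : G.edgeSet.ncard = Fintype.card V)
    {u1 u2 : V} (c1 : G.Walk u1 u1) (h1 : c1.IsCycle) (c2 : G.Walk u2 u2) (h2 : c2.IsCycle)
    {e : Sym2 V} (he1 : e ∈ c1.edges) (he2 : e ∉ c2.edges) : False := by
  induction e using Sym2.ind with
  | _ a b =>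
  have heE : s(a,b) ∈ G.edgeSet := c1.edges_subset_edgeSet he1
  set G1 := G.deleteEdges {s(a,b)} with hG1
  have hr : G1.Reachable a b := by
    have := (adj_and_reachable_delete_edges_iff_exists_cycle (G := G) (v := a) (w := b)).mpr
      ⟨u1, c1, h1, he1⟩
    exact this.2
  have hc1 : G1.Connected := my_connected_deleteEdges hconn hr
  have hE1 : G1.edgeSet.ncard = G.edgeSet.ncard - 1 := by
    rw [hG1, SimpleGraph.edgeSet_deleteEdges]
    exact Set.ncard_diff_singleton_of_mem heE
  have hsub : ∀ f ∈ c2.edges, f ∈ G1.edgeSet := by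
    intro f hf
    rw [hG1, SimpleGraph.edgeSet_deleteEdges]
    refine ⟨c2.edges_subset_edgeSet hf, ?_⟩
    simp only [Set.mem_singleton_iff]
    rintro rfl
    exact he2 hf
  let c2' : G1.Walk u2 u2 := c2.transfer G1 hsub
  have h2' : c2'.IsCycle := h2.transfer hsub
  have hlen : c2'.edges ≠ [] := by
    have h3 := h2'.three_le_length
    intro h
    rw [← Walk.length_edges, h] at h3
    simp at h3
  obtain ⟨f, hf⟩ := List.exists_mem_of_ne_nil _ hlen
  have hfE : f ∈ G1.edgeSet := c2'.edges_subset_edgeSet hf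
  induction f using Sym2.ind with
  | _ p q =>
  have hr2 : (G1.deleteEdges {s(p,q)}).Reachable p q := by
    have := (adj_and_reachable_delete_edges_iff_exists_cycle (G := G1) (v := p) (w := q)).mpr
      ⟨u2, c2', h2', hf⟩
    exact this.2
  have hc2 : (G1.deleteEdges {s(p,q)}).Connected := my_connected_deleteEdges hc1 hr2
  have hE2 : (G1.deleteEdges {s(p,q)}).edgeSet.ncard = G1.edgeSet.ncard - 1 := by
    rw [SimpleGraph.edgeSet_deleteEdges]
    exact Set.ncard_diff_singleton_of_mem hfE
  have hle := my_card_le_edges hc2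
  have hge1 : 0 < G.edgeSet.ncard := (Set.ncard_pos (Set.toFinite _)).mpr ⟨_, heE⟩
  have hge2 : 0 < G1.edgeSet.ncard := (Set.ncard_pos (Set.toFinite _)).mpr ⟨_, hfE⟩
  omega

lemma my_exists_edge_aux {u w v : V} (p : G.Walk u w) (hv : v ∈ p.support) (hvw : v ≠ w) :
    ∃ e ∈ p.edges, v ∈ e := by
  induction p with
  | nil => simp at hv; exact absurd hv hvw
  | cons h q ih =>
    rw [Walk.support_cons, List.mem_cons] at hv
    rcases hv with rfl | hv
    · exact ⟨_, List.mem_cons_self, Sym2.mem_mk_left _ _⟩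
    · obtain ⟨e, he, hve⟩ := ih hv hvw
      exact ⟨e, List.mem_cons_of_mem _ he, hve⟩

lemma my_exists_edge_cycle {v0 v : V} (c : G.Walk v0 v0) (hc : c.IsCycle)
    (hv : v ∈ c.support) : ∃ e ∈ c.edges, v ∈ e := by
  by_cases hvv : v = v0
  · subst hvv
    cases c with
    | nil => exact absurd rfl hc.ne_nil
    | cons h q => exact ⟨_, List.mem_cons_self, Sym2.mem_mk_left _ _⟩
  · exact my_exists_edge_aux c hv hvv

lemma my_exists_leaf (s : Set V)
    (hs : ∀ {u : V} (p : G.Walk u u), p.IsCycle → ¬(∀ z ∈ p.support, z ∈ s))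
    (hedge : ∃ a ∈ s, ∃ b ∈ s, G.Adj a b) :
    ∃ u ∈ s, ∃ w ∈ s, G.Adj u w ∧ ∀ b ∈ s, G.Adj u b → b = w := by
  classical
  set L := {n | ∃ (a b : V) (p : G.Walk a b), p.IsPath ∧ (∀ z ∈ p.support, z ∈ s) ∧ p.length = n}
    with hL
  obtain ⟨a0, ha0, b0, hb0, hab0⟩ := hedge
  have h1L : 1 ∈ L := by
    refine ⟨a0, b0, Walk.cons hab0 Walk.nil, ?_, ?_, by simp⟩
    · refine (Walk.cons_isPath_iff _ _).mpr ⟨Walk.IsPath.nil, ?_⟩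
      simpa using hab0.ne
    · intro z hz
      simp only [Walk.support_cons, Walk.support_nil, List.mem_cons, List.mem_singleton] at hz
      rcases hz with rfl | rfl | h
      · exact ha0
      · exact hb0
      · simp at h
  have hbdd : BddAbove L := by
    refine ⟨Fintype.card V, ?_⟩
    rintro n ⟨a, b, p, hp, _, rfl⟩
    have h1 : p.support.length = p.length + 1 := Walk.length_support p
    have h2 : p.support.length ≤ Fintype.card V := List.Nodup.length_le_card hp.support_nodup
    omega
  have hN := Nat.sSup_mem ⟨1, h1L⟩ hbdd
  obtain ⟨a, b, p, hp, hps, hlen⟩ := hN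
  have hN1 : 1 ≤ sSup L := le_csSup hbdd h1L
  rw [← hlen] at hN1
  cases p with
  | nil => simp at hN1
  | cons hadj q0 =>
    rename_i w0
    refine ⟨a, hps a (Walk.start_mem_support _), w0, hps w0 (by simp [Walk.support_cons]), hadj, ?_⟩
    intro b' hb's hadj'
    by_contra hne
    have hba : b' ≠ a := (G.ne_of_adj hadj').symm
    rw [Walk.cons_isPath_iff] at hp
    obtain ⟨hq0, hanq⟩ := hp
    by_cases hmem : b' ∈ q0.support
    · set q : G.Walk a b' := Walk.cons hadj (q0.takeUntil b' hmem) with hq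
      have hqpath : q.IsPath := by
        refine (Walk.cons_isPath_iff _ _).mpr ⟨hq0.takeUntil hmem, fun hc => hanq ?_⟩
        exact q0.support_takeUntil_subset hmem hc
      have hedge_notmem : s(b', a) ∉ q.edges := by
        rw [hq, Walk.edges_cons, List.mem_cons]
        rintro (heq | hmem2)
        · rcases Sym2.eq_iff.mp heq with ⟨rfl, rfl⟩ | ⟨rfl, -⟩
          · exact hba rfl
          · exact hne rfl
        · exact hanq (q0.support_takeUntil_subset hmem
            (Walk.snd_mem_support_of_mem_edges _ hmem2))
      have hcyc : (Walk.cons hadj'.symm q).IsCycle :=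
        (Walk.cons_isCycle_iff q hadj'.symm).mpr ⟨hqpath, by rwa [Sym2.eq_swap] at hedge_notmem ⊢⟩
      refine hs _ hcyc ?_
      intro z hz
      rw [Walk.support_cons, List.mem_cons] at hz
      rcases hz with rfl | hz
      · exact hb's
      rw [hq, Walk.support_cons, List.mem_cons] at hz
      rcases hz with rfl | hz
      · exact hps z (Walk.start_mem_support _)
      · exact hps z (by
          rw [Walk.support_cons, List.mem_cons]
          exact Or.inr (q0.support_takeUntil_subset hmem hz))
    · have hmem' : b' ∉ (Walk.cons hadj q0).support := by
        rw [Walk.support_cons, List.mem_cons]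
        rintro (rfl | h)
        · exact hba rfl
        · exact hmem h
      have hlonger : (sSup L) + 1 ∈ L := by
        refine ⟨b', b, Walk.cons hadj'.symm (Walk.cons hadj q0), ?_, ?_, ?_⟩
        · exact (Walk.cons_isPath_iff _ _).mpr ⟨(Walk.cons_isPath_iff _ _).mpr ⟨hq0, hanq⟩, hmem'⟩
        · intro z hz
          rw [Walk.support_cons, List.mem_cons] at hz
          rcases hz with rfl | hz
          · exact hb's
          · exact hps z hz
        · rw [Walk.length_cons, hlen]
      have := le_csSup hbdd hlonger
      omega

lemma my_forest : ∀ (n : ℕ) (s : Set V), s.ncard ≤ n →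
    (∀ {u : V} (p : G.Walk u u), p.IsCycle → ¬(∀ z ∈ p.support, z ∈ s)) →
    ∃ (I : Set V) (M : G.Subgraph), I ⊆ s ∧ G.IsIndepSet' I ∧ M.IsMatching ∧
      M.support ⊆ s ∧ s.ncard ≤ I.ncard + M.edgeSet.ncard := by
  intro n
  induction n with
  | zero =>
    intro s hn _
    refine ⟨∅, ⊥, Set.empty_subset s, Set.pairwise_empty _, ?_, ?_, by omega⟩
    · intro v hv
      simp [Subgraph.verts_bot] at hv
    · intro v hv
      rw [Subgraph.mem_support] at hv
      obtain ⟨z, hz⟩ := hv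
      simp at hz
  | succ n ih =>
    intro s hn hs
    by_cases hedge : ∃ a ∈ s, ∃ b ∈ s, G.Adj a b
    · obtain ⟨u, hu, w, hw, hadj, hleaf⟩ := my_exists_leaf s hs hedge
      have huw : u ≠ w := hadj.ne
      set s' : Set V := s \ {u, w} with hs'
      have hsub' : s' ⊆ s := Set.diff_subset
      have hpair : ({u, w} : Set V) ⊆ s := by
        intro z hz; rcases hz with rfl | rfl; exacts [hu, hw]
      have hcard2 : ({u, w} : Set V).ncard = 2 := Set.ncard_pair huw
      have hcards : s'.ncard = s.ncard - 2 := by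
        rw [hs', Set.ncard_diff hpair (Set.toFinite _), hcard2]
      have hsge : 2 ≤ s.ncard := by
        have := Set.ncard_le_ncard hpair (Set.toFinite _)
        omega
      obtain ⟨I', M', hI's, hI'ind, hM', hM's, hbound⟩ := ih s' (by omega)
        (fun p hp hsupp => hs p hp (fun z hz => hsub' (hsupp z hz)))
      refine ⟨insert u I', M' ⊔ G.subgraphOfAdj hadj, ?_, ?_, ?_, ?_, ?_⟩
      · intro z hz
        rcases hz with rfl | hz
        · exact hu
        · exact hsub' (hI's hz)
      · rw [SimpleGraph.IsIndepSet',
          @Set.pairwise_insert_of_symm _ (fun a b => ¬ G.Adj a b) _ _ ⟨fun a b (h : ¬G.Adj a b) hab => h hab.symm⟩]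
        refine ⟨hI'ind, fun b hb hne hadj' => ?_⟩
        have hbs : b ∈ s' := hI's hb
        have := hleaf b (hsub' hbs) hadj'
        subst this
        exact hbs.2 (by simp)
      · refine hM'.sup (Subgraph.IsMatching.subgraphOfAdj hadj) ?_
        rw [support_subgraphOfAdj, Set.disjoint_left]
        intro z hz
        have := hM's hz
        rw [hs'] at this
        intro hmem
        exact this.2 hmem
      · intro z hz
        rw [Subgraph.mem_support] at hz
        obtain ⟨z', hz'⟩ := hz
        rcases Subgraph.sup_adj.mp hz' with h | h
        · exact hsub' (hM's ((Subgraph.mem_support _).mpr ⟨z', h⟩))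
        · rw [subgraphOfAdj_adj] at h
          rcases Sym2.eq_iff.mp h with ⟨h1, -⟩ | ⟨-, h2⟩
          · exact h1 ▸ hu
          · exact h2 ▸ hw
      · have hnotmem : s(u, w) ∉ M'.edgeSet := by
          intro hmem
          have : u ∈ M'.support := (Subgraph.mem_support _).mpr ⟨w, Subgraph.mem_edgeSet.mp hmem⟩
          have := hM's this
          rw [hs'] at this
          exact this.2 (by simp)
        have hedgeSet : (M' ⊔ G.subgraphOfAdj hadj).edgeSet.ncard
            = M'.edgeSet.ncard + 1 := by
          rw [Subgraph.edgeSet_sup, edgeSet_subgraphOfAdj,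
            Set.ncard_union_eq (by simpa using hnotmem) (Set.toFinite _) (Set.toFinite _)]
          simp
        have hIcard : (insert u I').ncard = I'.ncard + 1 := by
          rw [Set.ncard_insert_of_notMem (fun h => (hI's h).2 (by simp)) (Set.toFinite _)]
        rw [hedgeSet, hIcard]
        omega
    · push_neg at hedge
      refine ⟨s, ⊥, subset_rfl, ?_, ?_, ?_, by omega⟩
      · intro a ha b hb _ hadj
        exact hedge a ha b hb hadj
      · intro v hv
        simp [Subgraph.verts_bot] at hv
      · intro v hv
        rw [Subgraph.mem_support] at hv
        obtain ⟨z, hz⟩ := hv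
        simp at hz

end Helpers

theorem stmt17 {V : Type*} [Fintype V] (G : SimpleGraph V)
    (hconn : G.Connected) (huni : G.edgeSet.ncard = Fintype.card V)
    {v : V} (c : G.Walk v v) (hc : c.IsCycle)
    (hsum : _root_.indepNum G + matchNum G = Fintype.card V - 1)
    (x y : V) (hx : x ∉ c.support) (hy : y ∈ c.support) (hadj : G.Adj x y) :
    ∀ S : Set V, IsMaxIndepSet G S →
      IsMaxIndepSet (treeComp G x y) (Subtype.val ⁻¹' S) := by
  classical
  intro S hS
  obtain ⟨hSind, hScard⟩ := hS
  set D := G.deleteEdges {s(x,y)} with hD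
  set K : Set V := (D.connectedComponentMk x).supp with hK
  -- basic facts
  have hxK : x ∈ K := by rw [hK, ConnectedComponent.mem_supp_iff]
  have hbridge : ¬ D.Reachable x y := by
    intro hr
    have hxyE : s(x,y) ∉ c.edges := fun h => hx (Walk.fst_mem_support_of_mem_edges c h)
    obtain ⟨u, p, hp, hep⟩ :=
      (adj_and_reachable_delete_edges_iff_exists_cycle (G := G) (v := x) (w := y)).mp ⟨hadj, hr⟩
    exact my_two_cycles hconn huni p hp c hc hep hxyE
  have hyK : y ∉ K := by
    intro h
    rw [hK, ConnectedComponent.mem_supp_iff] at h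
    exact hbridge (ConnectedComponent.exact h).symm
  -- cross edges
  have hcross : ∀ {a b : V}, a ∈ K → b ∉ K → G.Adj a b → a = x ∧ b = y := by
    intro a b haK hbK hab
    by_cases hne : s(a, b) = s(x, y)
    · rcases Sym2.eq_iff.mp hne with ⟨h1, h2⟩ | ⟨h1, h2⟩
      · exact ⟨h1, h2⟩
      · exact absurd (h1 ▸ haK) hyK
    · exfalso
      have hDadj : D.Adj a b := by
        rw [hD, SimpleGraph.deleteEdges_adj]
        exact ⟨hab, by simpa using hne⟩
      apply hbK
      rw [hK, ConnectedComponent.mem_supp_iff] at haK ⊢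
      rw [← haK]
      exact ConnectedComponent.sound hDadj.symm.reachable
  -- no cycle inside a set avoiding y
  have hnocyc : ∀ (s : Set V), y ∉ s →
      ∀ {u : V} (p : G.Walk u u), p.IsCycle → ¬(∀ z ∈ p.support, z ∈ s) := by
    intro s hys u p hp hsupp
    obtain ⟨e, heC, hye⟩ := my_exists_edge_cycle c hc hy
    have hep : e ∉ p.edges := by
      intro hep
      induction e using Sym2.ind with
      | _ e1 e2 =>
      rw [Sym2.mem_iff] at hye
      rcases hye with rfl | rfl
      · exact hys (hsupp _ (Walk.fst_mem_support_of_mem_edges p hep))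
      · exact hys (hsupp _ (Walk.snd_mem_support_of_mem_edges p hep))
    exact my_two_cycles hconn huni c hc p hp heC hep
  -- adjacency in treeComp
  have hTadj : ∀ a b : ↥K, (treeComp G x y).Adj a b ↔ G.Adj ↑a ↑b := by
    intro a b
    have h0 : (treeComp G x y).Adj a b ↔ D.Adj ↑a ↑b := Iff.rfl
    rw [h0, hD, SimpleGraph.deleteEdges_adj]
    constructor
    · intro h
      exact h.1
    · intro h
      refine ⟨h, ?_⟩
      simp only [Set.mem_singleton_iff]
      intro heq
      rcases Sym2.eq_iff.mp heq with ⟨-, h2⟩ | ⟨h1, -⟩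
      · exact hyK (h2 ▸ b.2)
      · exact hyK (h1 ▸ a.2)
  -- indepNum of treeComp equals relAlpha G K
  have hbddT : BddAbove {n | ∃ t : Set ↥K, (treeComp G x y).IsIndepSet' t ∧ t.ncard = n} := by
    refine ⟨Nat.card ↥K, ?_⟩
    rintro n ⟨t, _, rfl⟩
    simpa [Set.ncard_univ] using Set.ncard_le_ncard (Set.subset_univ t) Set.finite_univ
  have hF7 : _root_.indepNum (treeComp G x y) = relAlpha G K := by
    apply le_antisymm
    · obtain ⟨t, htind, htcard⟩ :=
        Nat.sSup_mem (s := {n | ∃ t : Set ↥K, (treeComp G x y).IsIndepSet' t ∧ t.ncard = n})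
          ⟨0, ∅, Set.pairwise_empty _, Set.ncard_empty _⟩ hbddT
      have hIind : G.IsIndepSet' (Subtype.val '' t) := by
        rintro a ⟨a', ha', rfl⟩ b ⟨b', hb', rfl⟩ hne hab
        have hne' : a' ≠ b' := fun h => hne (by rw [h])
        exact htind ha' hb' hne' ((hTadj a' b').mpr hab)
      have hIsub : Subtype.val '' t ⊆ K := by
        rintro a ⟨a', _, rfl⟩; exact a'.2
      have := my_le_relAlpha hIsub hIind
      rwa [Set.ncard_image_of_injective _ Subtype.val_injective, htcard] at this
    · obtain ⟨I, hIK, hIind, hIcard⟩ := my_relAlpha_exists (G := G) K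
      set t : Set ↥K := Subtype.val ⁻¹' I with ht
      have htind : (treeComp G x y).IsIndepSet' t := by
        intro a ha b hb hne hab
        exact hIind ha hb (fun h => hne (Subtype.val_injective h)) ((hTadj a b).mp hab)
      have htcard : t.ncard = I.ncard := by
        have himg : Subtype.val '' t = I := by
          rw [ht, Subtype.image_preimage_coe]
          exact Set.inter_eq_self_of_subset_right hIK
        rw [← himg, Set.ncard_image_of_injective _ Subtype.val_injective]
      rw [← hIcard, ← htcard]
      exact le_csSup hbddT ⟨t, htind, rfl⟩
  -- the key cardinality result
  have hSKle : (S ∩ K).ncard ≤ relAlpha G K :=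
    my_le_relAlpha Set.inter_subset_right (hSind.mono Set.inter_subset_left)
  have hsplit : (S ∩ K).ncard + (S \ K).ncard = S.ncard :=
    Set.ncard_inter_add_ncard_diff_eq_ncard S K (Set.toFinite _)
  have hsymm : Symmetric (fun a b => ¬ G.Adj a b) := fun a b h hab => h hab.symm
  have hnotlt : ¬ ((S ∩ K).ncard < relAlpha G K) := by
    intro hlt
    -- x is in every maximum relative independent set of K
    have hxcore : ∀ J : Set V, J ⊆ K → G.IsIndepSet' J → J.ncard = relAlpha G K → x ∈ J := by
      intro J hJK hJind hJcard
      by_contra hxJ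
      have hS'ind : G.IsIndepSet' ((S \ K) ∪ J) := by
        rw [SimpleGraph.IsIndepSet', @Set.pairwise_union_of_symm _ (fun a b => ¬ G.Adj a b) _ _ ⟨fun a b h => hsymm h⟩]
        refine ⟨hSind.mono Set.diff_subset, hJind, ?_⟩
        intro a ha b hb _ hab
        obtain ⟨h1, h2⟩ := hcross (hJK hb) ha.2 hab.symm
        exact hxJ (h1 ▸ hb)
      have hdisj : Disjoint (S \ K) J := by
        rw [Set.disjoint_left]
        intro a ha haJ
        exact ha.2 (hJK haJ)
      have hcard' : ((S \ K) ∪ J).ncard = (S \ K).ncard + J.ncard :=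
        Set.ncard_union_eq hdisj (Set.toFinite _) (Set.toFinite _)
      have := my_le_indepNum hS'ind
      rw [hcard', hJcard] at this
      omega
    obtain ⟨IT, hITK, hITind, hITcard⟩ := my_relAlpha_exists (G := G) K
    have hxIT : x ∈ IT := hxcore IT hITK hITind hITcard
    -- y is in every maximum relative independent set of Kᶜ
    have hycore : ∀ J : Set V, J ⊆ Kᶜ → G.IsIndepSet' J → J.ncard = relAlpha G Kᶜ → y ∈ J := by
      intro J hJc hJind hJcard
      by_contra hyJ
      have hS''ind : G.IsIndepSet' (IT ∪ J) := by
        rw [SimpleGraph.IsIndepSet', @Set.pairwise_union_of_symm _ (fun a b => ¬ G.Adj a b) _ _ ⟨fun a b h => hsymm h⟩]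
        refine ⟨hITind, hJind, ?_⟩
        intro a ha b hb _ hab
        obtain ⟨h1, h2⟩ := hcross (hITK ha) (hJc hb) hab
        exact hyJ (h2 ▸ hb)
      have hdisj : Disjoint IT J := by
        rw [Set.disjoint_left]
        intro a ha haJ
        exact (hJc haJ) (hITK ha)
      have hcard'' : (IT ∪ J).ncard = IT.ncard + J.ncard :=
        Set.ncard_union_eq hdisj (Set.toFinite _) (Set.toFinite _)
      have hSKc : (S \ K).ncard ≤ relAlpha G Kᶜ := by
        refine my_le_relAlpha ?_ (hSind.mono Set.diff_subset)
        intro a ha; exact ha.2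
      have := my_le_indepNum hS''ind
      rw [hcard'', hITcard, hJcard] at this
      omega
    obtain ⟨J2, hJ2c, hJ2ind, hJ2card⟩ := my_relAlpha_exists (G := G) Kᶜ
    have hyJ2 : y ∈ J2 := hycore J2 hJ2c hJ2ind hJ2card
    -- lower bound on indepNum G
    have hαlow : (IT \ {x}).ncard + J2.ncard ≤ _root_.indepNum G := by
      have hind : G.IsIndepSet' ((IT \ {x}) ∪ J2) := by
        rw [SimpleGraph.IsIndepSet', @Set.pairwise_union_of_symm _ (fun a b => ¬ G.Adj a b) _ _ ⟨fun a b h => hsymm h⟩]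
        refine ⟨hITind.mono Set.diff_subset, hJ2ind, ?_⟩
        intro a ha b hb _ hab
        obtain ⟨h1, h2⟩ := hcross (hITK ha.1) (hJ2c hb) hab
        exact ha.2 (by simp [h1])
      have hdisj : Disjoint (IT \ {x}) J2 := by
        rw [Set.disjoint_left]
        intro a ha haJ
        exact (hJ2c haJ) (hITK ha.1)
      have := my_le_indepNum hind
      rwa [Set.ncard_union_eq hdisj (Set.toFinite _) (Set.toFinite _)] at this
    have hITx : (IT \ {x}).ncard + 1 = IT.ncard := by
      rw [Set.ncard_diff_singleton_of_mem hxIT]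
      have : 0 < IT.ncard := (Set.ncard_pos (Set.toFinite _)).mpr ⟨x, hxIT⟩
      omega
    -- relative alpha inequalities
    have hi1 : relAlpha G (K \ {x}) + 1 ≤ relAlpha G K := by
      obtain ⟨J, hJsub, hJind, hJcard⟩ := my_relAlpha_exists (G := G) (K \ {x})
      have hJK : J ⊆ K := hJsub.trans Set.diff_subset
      have hle := my_le_relAlpha hJK hJind
      rcases lt_or_eq_of_le hle with h | h
      · omega
      · exact absurd (hxcore J hJK hJind h) (fun hxJ => (hJsub hxJ).2 rfl)
    have hi2 : relAlpha G (Kᶜ \ {y}) + 1 ≤ relAlpha G Kᶜ := by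
      obtain ⟨J, hJsub, hJind, hJcard⟩ := my_relAlpha_exists (G := G) (Kᶜ \ {y})
      have hJK : J ⊆ Kᶜ := hJsub.trans Set.diff_subset
      have hle := my_le_relAlpha hJK hJind
      rcases lt_or_eq_of_le hle with h | h
      · omega
      · exact absurd (hycore J hJK hJind h) (fun hyJ => (hJsub hyJ).2 rfl)
    -- forests
    have hcb1 : (K \ {x}).ncard ≤ Fintype.card V := by
      simpa [Set.ncard_univ] using
        Set.ncard_le_ncard (Set.subset_univ (K \ {x})) Set.finite_univ
    have hcb2 : (Kᶜ \ {y}).ncard ≤ Fintype.card V := by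
      simpa [Set.ncard_univ] using
        Set.ncard_le_ncard (Set.subset_univ (Kᶜ \ {y})) Set.finite_univ
    obtain ⟨I1, M1, hI1sub, hI1ind, hM1, hM1sup, hb1⟩ :=
      my_forest (G := G) (Fintype.card V) (K \ {x}) hcb1
        (fun {u} p hp => hnocyc (K \ {x}) (fun h => hyK h.1) p hp)
    obtain ⟨I2, M2, hI2sub, hI2ind, hM2, hM2sup, hb2⟩ :=
      my_forest (G := G) (Fintype.card V) (Kᶜ \ {y}) hcb2
        (fun {u} p hp => hnocyc (Kᶜ \ {y}) (fun h => h.2 rfl) p hp)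
    have hI1le : I1.ncard ≤ relAlpha G (K \ {x}) := my_le_relAlpha hI1sub hI1ind
    have hI2le : I2.ncard ≤ relAlpha G (Kᶜ \ {y}) := my_le_relAlpha hI2sub hI2ind
    -- combined matching
    have hd1 : Disjoint M1.support (G.subgraphOfAdj hadj).support := by
      rw [support_subgraphOfAdj, Set.disjoint_left]
      intro a ha hmem
      have := hM1sup ha
      rcases hmem with rfl | rfl
      · exact this.2 rfl
      · exact hyK this.1
    have hM1x : (M1 ⊔ G.subgraphOfAdj hadj).IsMatching :=
      hM1.sup (Subgraph.IsMatching.subgraphOfAdj hadj) hd1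
    have hd2 : Disjoint (M1 ⊔ G.subgraphOfAdj hadj).support M2.support := by
      rw [Set.disjoint_left]
      intro a ha hmem
      have haK2 := hM2sup hmem
      rw [Subgraph.mem_support] at ha
      obtain ⟨z, hz⟩ := ha
      rcases Subgraph.sup_adj.mp hz with h | h
      · exact haK2.1 (Set.diff_subset (hM1sup ((Subgraph.mem_support _).mpr ⟨z, h⟩)))
      · rw [subgraphOfAdj_adj] at h
        rcases Sym2.eq_iff.mp h with ⟨h1, -⟩ | ⟨-, h2⟩
        · exact haK2.1 (h1 ▸ hxK)
        · exact haK2.2 (h2 ▸ rfl)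
    have hM : ((M1 ⊔ G.subgraphOfAdj hadj) ⊔ M2).IsMatching := hM1x.sup hM2 hd2
    have hmcard : ((M1 ⊔ G.subgraphOfAdj hadj) ⊔ M2).edgeSet.ncard
        = M1.edgeSet.ncard + 1 + M2.edgeSet.ncard := by
      have hxy1 : s(x, y) ∉ M1.edgeSet := by
        intro hmem
        exact (hM1sup ((Subgraph.mem_support _).mpr ⟨y, Subgraph.mem_edgeSet.mp hmem⟩)).2 rfl
      have hxy2 : s(x, y) ∉ M2.edgeSet := by
        intro hmem
        exact (hM2sup ((Subgraph.mem_support _).mpr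
          ⟨x, (Subgraph.mem_edgeSet.mp hmem).symm⟩)).2 rfl
      have hd12 : Disjoint M1.edgeSet M2.edgeSet := by
        rw [Set.disjoint_left]
        intro e he1 he2
        induction e using Sym2.ind with
        | _ e1 e2 =>
        have h1 : e1 ∈ M1.support := (Subgraph.mem_support _).mpr ⟨e2, Subgraph.mem_edgeSet.mp he1⟩
        have h2 : e1 ∈ M2.support := (Subgraph.mem_support _).mpr ⟨e2, Subgraph.mem_edgeSet.mp he2⟩
        exact (hM2sup h2).1 (Set.diff_subset (hM1sup h1))
      rw [Subgraph.edgeSet_sup, Subgraph.edgeSet_sup, edgeSet_subgraphOfAdj]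
      rw [Set.ncard_union_eq ?hd (Set.toFinite _) (Set.toFinite _),
        Set.ncard_union_eq (by simpa using hxy1) (Set.toFinite _) (Set.toFinite _)]
      · simp
      case hd =>
        rw [Set.disjoint_left]
        intro e he hmem
        rcases he with he | he
        · exact (Set.disjoint_left.mp hd12) he hmem
        · rw [Set.mem_singleton_iff] at he
          exact hxy2 (he ▸ hmem)
    have hmle := my_le_matchNum hM
    rw [hmcard] at hmle
    -- cardinal arithmetic
    have he1 : K.ncard + Kᶜ.ncard = Fintype.card V := by
      rw [← Nat.card_eq_fintype_card]
      exact Set.ncard_add_ncard_compl K (Set.toFinite _) (Set.toFinite _)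
    have he2 : (K \ {x}).ncard + 1 = K.ncard := by
      rw [Set.ncard_diff_singleton_of_mem hxK]
      have : 0 < K.ncard := (Set.ncard_pos (Set.toFinite _)).mpr ⟨x, hxK⟩
      omega
    have he3 : (Kᶜ \ {y}).ncard + 1 = Kᶜ.ncard := by
      rw [Set.ncard_diff_singleton_of_mem (Set.mem_compl hyK)]
      have : 0 < Kᶜ.ncard := (Set.ncard_pos (Set.toFinite _)).mpr ⟨y, Set.mem_compl hyK⟩
      omega
    have hnpos : 0 < Fintype.card V := by
      have : Nonempty V := hconn.nonempty
      exact Fintype.card_pos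
    omega
  have hSKcard : (S ∩ K).ncard = relAlpha G K := by omega
  -- conclusion
  constructor
  · intro a ha b hb hne hab
    exact hSind ha hb (fun h => hne (Subtype.val_injective h)) ((hTadj a b).mp hab)
  · have himg : Subtype.val '' (Subtype.val ⁻¹' S : Set ↥K) = S ∩ K := by
      rw [Subtype.image_preimage_coe, Set.inter_comm]
    have : (Subtype.val ⁻¹' S : Set ↥K).ncard = (S ∩ K).ncard := by
      rw [← himg, Set.ncard_image_of_injective _ Subtype.val_injective]
    rw [this, hSKcard, hF7]
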